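/- Many-sorted Łoś–Vaught test for completely split signatures: Suppose Σ is completely split (each sort has its own disjoint sub-signature Σ_σ), T is a Σ-theory all of whose models interpret every sort as an infinite set, and T is κ-categorical for some cardinal function κ with κ(σ) ≥ |Σ_σ| for every sort σ. Then T is complete. -/

import Mathlib

set_option autoImplicit false

/-- A many-sorted first-order signature. -/
structure MSSignature : Type 1 where
  Sorts : Type
  Func : Type
  Pred : Type
  funcDom : Func → List Sorts
  funcCod : Func → Sorts
  predDom : Pred → List Sorts

namespace MS

variable (Sg : MSSignature)

/-- Many-sorted terms; variables of each sort are indexed by naturals. -/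
inductive Term : Sg.Sorts → Type where
  | var (s : Sg.Sorts) (n : ℕ) : Term s
  | app (f : Sg.Func)
      (args : ∀ i : Fin (Sg.funcDom f).length, Term ((Sg.funcDom f).get i)) :
      Term (Sg.funcCod f)

/-- Many-sorted first-order formulas. -/
inductive Formula : Type where
  | eq {s : Sg.Sorts} (t u : Term Sg s) : Formula
  | pred (P : Sg.Pred)
      (args : ∀ i : Fin (Sg.predDom P).length, Term Sg ((Sg.predDom P).get i)) : Formula
  | falsum : Formula
  | imp (φ ψ : Formula) : Formula
  | all (s : Sg.Sorts) (n : ℕ) (φ : Formula) : Formula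

/-- A structure for a many-sorted signature: each sort gets a nonempty domain. -/
structure Structure : Type 1 where
  dom : Sg.Sorts → Type
  dom_nonempty : ∀ s, Nonempty (dom s)
  interpFunc : ∀ f : Sg.Func,
    (∀ i : Fin (Sg.funcDom f).length, dom ((Sg.funcDom f).get i)) → dom (Sg.funcCod f)
  interpPred : ∀ P : Sg.Pred,
    (∀ i : Fin (Sg.predDom P).length, dom ((Sg.predDom P).get i)) → Prop

variable {Sg}

/-- Variable assignments. -/
def Assign (A : Structure Sg) : Type := ∀ s : Sg.Sorts, ℕ → A.dom s

open Classical in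
noncomputable
def Assign.update {A : Structure Sg} (ν : Assign A) (s : Sg.Sorts) (n : ℕ) (a : A.dom s) :
    Assign A := fun t m =>
  if h : s = t then (if m = n then h ▸ a else ν t m) else ν t m

def Term.eval {A : Structure Sg} (ν : Assign A) : ∀ {s : Sg.Sorts}, Term Sg s → A.dom s
  | _, .var s n => ν s n
  | _, .app f args => A.interpFunc f fun i => Term.eval ν (args i)

/-- Tarskian satisfaction. -/
def Sat (A : Structure Sg) (ν : Assign A) : Formula Sg → Prop
  | .eq t u => t.eval ν = u.eval ν
  | .pred P args => A.interpPred P fun i => (args i).eval ν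
  | .falsum => False
  | .imp φ ψ => Sat A ν φ → Sat A ν ψ
  | .all s n φ => ∀ a : A.dom s, Sat A (ν.update s n a) φ

/-- Derived connectives. -/
def Formula.not (φ : Formula Sg) : Formula Sg := .imp φ .falsum
def Formula.and (φ ψ : Formula Sg) : Formula Sg := (Formula.imp φ ψ.not).not
def Formula.or (φ ψ : Formula Sg) : Formula Sg := .imp φ.not ψ
def Formula.ex (s : Sg.Sorts) (n : ℕ) (φ : Formula Sg) : Formula Sg :=
  ((Formula.all s n φ.not)).not
def Formula.andList : List (Formula Sg) → Formula Sg :=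
  List.foldr Formula.and (Formula.not .falsum)
def Formula.orList : List (Formula Sg) → Formula Sg :=
  List.foldr Formula.or .falsum

/-- Occurrence of variable `(s, n)` in a term. -/
def Term.varOccurs (s : Sg.Sorts) (n : ℕ) : ∀ {t : Sg.Sorts}, Term Sg t → Prop
  | _, .var s' n' => s = s' ∧ n = n'
  | _, .app _ args => ∃ i, Term.varOccurs s n (args i)

/-- Free occurrence of variable `(s, n)` in a formula. -/
def Formula.varFree (s : Sg.Sorts) (n : ℕ) : Formula Sg → Prop
  | .eq t u => t.varOccurs s n ∨ u.varOccurs s n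
  | .pred _ args => ∃ i, (args i).varOccurs s n
  | .falsum => False
  | .imp φ ψ => φ.varFree s n ∨ ψ.varFree s n
  | .all s' n' φ => φ.varFree s n ∧ ¬(s = s' ∧ n = n')

def Formula.IsSentence (φ : Formula Sg) : Prop := ∀ s n, ¬ φ.varFree s n

/-- Quantifier-free formulas. -/
def Formula.IsQF : Formula Sg → Prop
  | .eq _ _ => True
  | .pred _ _ => True
  | .falsum => True
  | .imp φ ψ => φ.IsQF ∧ ψ.IsQF
  | .all _ _ _ => False

/-- A structure is a model of a set of formulas (a theory) if it satisfies
every axiom under every assignment. -/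
def Models (A : Structure Sg) (T : Set (Formula Sg)) : Prop :=
  ∀ φ ∈ T, ∀ ν : Assign A, Sat A ν φ

/-- Elementary equivalence: same sentences hold. -/
def ElemEquiv (A B : Structure Sg) : Prop :=
  ∀ φ : Formula Sg, φ.IsSentence →
    ((∀ ν : Assign A, Sat A ν φ) ↔ (∀ ν : Assign B, Sat B ν φ))

/-- Substructures: sort-wise subsets closed under the functions. -/
structure Substructure (A : Structure Sg) : Type 1 where
  carrier : ∀ s : Sg.Sorts, Set (A.dom s)
  carrier_nonempty : ∀ s, (carrier s).Nonempty
  closed : ∀ (f : Sg.Func)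
    (args : ∀ i : Fin (Sg.funcDom f).length, A.dom ((Sg.funcDom f).get i)),
    (∀ i, args i ∈ carrier _) → A.interpFunc f args ∈ carrier _

/-- The induced structure on a substructure. -/
def Substructure.toStructure {A : Structure Sg} (B : Substructure A) : Structure Sg where
  dom s := ↥(B.carrier s)
  dom_nonempty s := ⟨⟨(B.carrier_nonempty s).choose, (B.carrier_nonempty s).choose_spec⟩⟩
  interpFunc f args :=
    ⟨A.interpFunc f fun i => (args i).1, B.closed f _ fun i => (args i).2⟩
  interpPred P args := A.interpPred P fun i => (args i).1

/-- View an assignment into a substructure as an assignment into the ambient structure. -/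
def Substructure.amb {A : Structure Sg} (B : Substructure A)
    (ν : Assign B.toStructure) : Assign A := fun s n => (ν s n).1

/-- `B` is an elementary substructure of `A`. -/
def Substructure.IsElementary {A : Structure Sg} (B : Substructure A) : Prop :=
  ∀ (φ : Formula Sg) (ν : Assign B.toStructure),
    Sat B.toStructure ν φ ↔ Sat A (B.amb ν) φ

/-- Isomorphisms of structures. -/
structure Iso (A B : Structure Sg) : Type 1 where
  toEquiv : ∀ s, A.dom s ≃ B.dom s
  map_func : ∀ (f : Sg.Func) args,
    toEquiv _ (A.interpFunc f args) = B.interpFunc f (fun i => toEquiv _ (args i))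
  map_pred : ∀ (P : Sg.Pred) args,
    A.interpPred P args ↔ B.interpPred P (fun i => toEquiv _ (args i))

end MS

/-- The cardinality of a signature: sorts + function symbols + predicate symbols. -/
noncomputable def MSSignature.card (Sg : MSSignature) : Cardinal :=
  Cardinal.mk Sg.Sorts + Cardinal.mk Sg.Func + Cardinal.mk Sg.Pred

/-- A countable signature. -/
def MSSignature.IsCountable (Sg : MSSignature) : Prop :=
  Countable Sg.Sorts ∧ Countable Sg.Func ∧ Countable Sg.Pred

namespace MS

variable {Sg : MSSignature}

/-- A splitting of a signature by a partition `Λ` of its sorts: every function and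
predicate symbol uses sorts from a single part only. -/
structure Split (Sg : MSSignature) (Λ : Type) where
  sortPart : Sg.Sorts → Λ
  funcPart : Sg.Func → Λ
  predPart : Sg.Pred → Λ
  func_dom : ∀ (f : Sg.Func) (i : Fin (Sg.funcDom f).length),
    sortPart ((Sg.funcDom f).get i) = funcPart f
  func_cod : ∀ f : Sg.Func, sortPart (Sg.funcCod f) = funcPart f
  pred_dom : ∀ (P : Sg.Pred) (i : Fin (Sg.predDom P).length),
    sortPart ((Sg.predDom P).get i) = predPart P

/-- A term lies in the sub-signature `Σ_l`. -/
def Term.inPart {Λ : Type} (sp : Split Sg Λ) (l : Λ) :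
    ∀ {s : Sg.Sorts}, Term Sg s → Prop
  | s, .var _ _ => sp.sortPart s = l
  | _, .app f args => sp.funcPart f = l ∧ ∀ i, Term.inPart sp l (args i)

/-- A formula lies in the sub-signature `Σ_l`: all its symbols and the sorts of all
its variables belong to the part `l`. -/
def Formula.inPart {Λ : Type} (sp : Split Sg Λ) (l : Λ) : Formula Sg → Prop
  | .eq (s := s) t u => sp.sortPart s = l ∧ t.inPart sp l ∧ u.inPart sp l
  | .pred P args => sp.predPart P = l ∧ ∀ i, (args i).inPart sp l
  | .falsum => True
  | .imp φ ψ => φ.inPart sp l ∧ ψ.inPart sp l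
  | .all s _ φ => sp.sortPart s = l ∧ φ.inPart sp l

/-- A generalized `Λ`-cube: a conjunction of formulas, each over a single
sub-signature, with pairwise distinct parts. -/
def Formula.IsGenCube {Λ : Type} (sp : Split Sg Λ) (φ : Formula Sg) : Prop :=
  ∃ L : List (Λ × Formula Sg), (L.map Prod.fst).Nodup ∧
    (∀ p ∈ L, (p.2).inPart sp p.1) ∧ φ = Formula.andList (L.map Prod.snd)

/-- A generalized `Λ`-clause: a disjunction of formulas, each over a single
sub-signature, with pairwise distinct parts. -/
def Formula.IsGenClause {Λ : Type} (sp : Split Sg Λ) (φ : Formula Sg) : Prop :=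
  ∃ L : List (Λ × Formula Sg), (L.map Prod.fst).Nodup ∧
    (∀ p ∈ L, (p.2).inPart sp p.1) ∧ φ = Formula.orList (L.map Prod.snd)

/-- Generalized disjunctive normal form: a disjunction of generalized cubes. -/
def Formula.IsGDNF {Λ : Type} (sp : Split Sg Λ) (φ : Formula Sg) : Prop :=
  ∃ L : List (Formula Sg), (∀ ψ ∈ L, ψ.IsGenCube sp) ∧ φ = Formula.orList L

/-- Generalized conjunctive normal form: a conjunction of generalized clauses. -/
def Formula.IsGCNF {Λ : Type} (sp : Split Sg Λ) (φ : Formula Sg) : Prop :=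
  ∃ L : List (Formula Sg), (∀ ψ ∈ L, ψ.IsGenClause sp) ∧ φ = Formula.andList L

/-- Logical equivalence of many-sorted formulas. -/
def LogEquiv (φ ψ : Formula Sg) : Prop :=
  ∀ (A : Structure Sg) (ν : Assign A), Sat A ν φ ↔ Sat A ν ψ

/-- The cardinality of the sub-signature `Σ_l` determined by a splitting. -/
noncomputable def Split.partCard {Λ : Type} (sp : Split Sg Λ) (l : Λ) : Cardinal :=
  Cardinal.mk {s : Sg.Sorts // sp.sortPart s = l} +
    Cardinal.mk {f : Sg.Func // sp.funcPart f = l} +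
    Cardinal.mk {P : Sg.Pred // sp.predPart P = l}

end MS

open MS Cardinal

namespace MS

/-- `T` is `κ`-categorical: there is exactly one model (up to isomorphism) whose
sort cardinalities are given by `κ`. -/
def Categorical {Sg : MSSignature} (T : Set (Formula Sg))
    (κ : Sg.Sorts → Cardinal) : Prop :=
  (∃ A : Structure Sg, Models A T ∧ ∀ s, #(A.dom s) = κ s) ∧
    ∀ A B : Structure Sg, Models A T → Models B T →
      (∀ s, #(A.dom s) = κ s) → (∀ s, #(B.dom s) = κ s) → Nonempty (Iso A B)

/-- `T` is complete: every sentence is entailed or refuted by `T`. -/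
def Complete {Sg : MSSignature} (T : Set (Formula Sg)) : Prop :=
  ∀ φ : Formula Sg, φ.IsSentence →
    (∀ A : Structure Sg, Models A T → ∀ ν : Assign A, Sat A ν φ) ∨
    (∀ A : Structure Sg, Models A T → ∀ ν : Assign A, ¬ Sat A ν φ)

end MS

set_option maxHeartbeats 1000000

open MS Cardinal

namespace MS
variable {Sg : MSSignature}

/-! ### Basic Sat lemmas -/

theorem sat_not {A : Structure Sg} {ν : Assign A} {φ : Formula Sg} :
    Sat A ν φ.not ↔ ¬ Sat A ν φ := by
  simp [Formula.not, Sat]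

theorem sat_or {A : Structure Sg} {ν : Assign A} {φ ψ : Formula Sg} :
    Sat A ν (φ.or ψ) ↔ Sat A ν φ ∨ Sat A ν ψ := by
  simp [Formula.or, Sat, sat_not]
  tauto

theorem sat_and {A : Structure Sg} {ν : Assign A} {φ ψ : Formula Sg} :
    Sat A ν (φ.and ψ) ↔ Sat A ν φ ∧ Sat A ν ψ := by
  simp [Formula.and, Sat, sat_not, Formula.not]

theorem sat_orList {A : Structure Sg} {ν : Assign A} {L : List (Formula Sg)} :
    Sat A ν (Formula.orList L) ↔ ∃ φ ∈ L, Sat A ν φ := by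
  induction L with
  | nil => simp [Formula.orList, Sat]
  | cons φ L ih =>
    simp only [Formula.orList, List.foldr] at *
    rw [sat_or, ih]; simp

theorem sat_andList {A : Structure Sg} {ν : Assign A} {L : List (Formula Sg)} :
    Sat A ν (Formula.andList L) ↔ ∀ φ ∈ L, Sat A ν φ := by
  induction L with
  | nil => simp [Formula.andList, Sat, sat_not]
  | cons φ L ih =>
    simp only [Formula.andList, List.foldr] at *
    rw [sat_and, ih]; simp

/-! ### update lemmas -/

theorem update_same {A : Structure Sg} (ν : Assign A) (s : Sg.Sorts) (n : ℕ) (a : A.dom s)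
    (m : ℕ) : (ν.update s n a) s m = if m = n then a else ν s m := by
  simp [Assign.update]

theorem update_other {A : Structure Sg} (ν : Assign A) {s t : Sg.Sorts} (hne : s ≠ t)
    (n : ℕ) (a : A.dom s) : (ν.update s n a) t = ν t := by
  funext m; simp [Assign.update, hne]

theorem update_self {A : Structure Sg} (ν : Assign A) (s : Sg.Sorts) (n : ℕ) :
    ν.update s n (ν s n) = ν := by
  funext t m
  by_cases h : s = t
  · subst h
    simp [Assign.update]
    intro h; subst h; rfl
  · simp [Assign.update, h]

theorem update_out {A : Structure Sg} (ν : Assign A) {s t : Sg.Sorts} {n m : ℕ}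
    (a : A.dom s) (h : ¬(t = s ∧ m = n)) : (ν.update s n a) t m = ν t m := by
  by_cases hc : s = t
  · subst hc
    rw [update_same]
    have : ¬ m = n := fun hm => h ⟨rfl, hm⟩
    simp [this]
  · rw [update_other ν hc]

/-! ### Coincidence lemma -/

theorem eval_congr {A : Structure Sg} {ν ν' : Assign A} :
    ∀ {t : Sg.Sorts} (tm : Term Sg t),
      (∀ s n, tm.varOccurs s n → ν s n = ν' s n) → tm.eval ν = tm.eval ν'
  | _, .var s n, h => h s n ⟨rfl, rfl⟩
  | _, .app f args, h => by
    simp only [Term.eval]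
    congr 1
    funext i
    exact eval_congr (args i) (fun s n hocc => h s n ⟨i, hocc⟩)

theorem sat_congr {A : Structure Sg} :
    ∀ (φ : Formula Sg) {ν ν' : Assign A},
      (∀ s n, φ.varFree s n → ν s n = ν' s n) → (Sat A ν φ ↔ Sat A ν' φ)
  | .eq t u, ν, ν', h => by
    simp only [Sat]
    rw [eval_congr t (fun s n ho => h s n (Or.inl ho)),
      eval_congr u (fun s n ho => h s n (Or.inr ho))]
  | .pred P args, ν, ν', h => by
    simp only [Sat]
    have : (fun i => (args i).eval ν) = (fun i => (args i).eval ν') := by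
      funext i; exact eval_congr (args i) (fun s n ho => h s n ⟨i, ho⟩)
    rw [this]
  | .falsum, _, _, _ => Iff.rfl
  | .imp φ ψ, ν, ν', h => by
    simp only [Sat]
    rw [sat_congr φ (fun s n hf => h s n (Or.inl hf)),
      sat_congr ψ (fun s n hf => h s n (Or.inr hf))]
  | .all s' n' φ, ν, ν', h => by
    simp only [Sat]
    refine forall_congr' fun a => sat_congr φ (fun s n hf => ?_)
    by_cases hc : s = s' ∧ n = n'
    · obtain ⟨hc1, hc2⟩ := hc; subst hc1; subst hc2
      rw [update_same, update_same]; simp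
    · rw [update_out, update_out]
      · exact h s n ⟨hf, hc⟩
      · exact hc
      · exact hc

/-- A closed formula's satisfaction does not depend on the assignment. -/
theorem sat_closed {A : Structure Sg} {φ : Formula Sg} (hφ : ∀ s n, ¬ φ.varFree s n)
    {ν ν' : Assign A} : Sat A ν φ ↔ Sat A ν' φ :=
  sat_congr φ (fun s n hf => absurd hf (hφ s n))

/-! ### inPart facts for completely split signatures -/

variable {sp : Split Sg Sg.Sorts}

theorem sortPart_eq (hsplit : sp.sortPart = id) (s : Sg.Sorts) : sp.sortPart s = s := by rw [hsplit]; rfl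

theorem funcDom_eq (hsplit : sp.sortPart = id) (f : Sg.Func) (i : Fin (Sg.funcDom f).length) :
    (Sg.funcDom f).get i = sp.funcPart f := by
  rw [← sp.func_dom f i, sortPart_eq hsplit]

theorem funcCod_eq (hsplit : sp.sortPart = id) (f : Sg.Func) : Sg.funcCod f = sp.funcPart f := by
  rw [← sp.func_cod f, sortPart_eq hsplit]

theorem predDom_eq (hsplit : sp.sortPart = id) (P : Sg.Pred) (i : Fin (Sg.predDom P).length) :
    (Sg.predDom P).get i = sp.predPart P := by
  rw [← sp.pred_dom P i, sortPart_eq hsplit]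

theorem term_inPart_congr {l l' : Sg.Sorts} {t : Sg.Sorts} {tm : Term Sg t}
    (h : l = l') (hin : tm.inPart sp l) : tm.inPart sp l' := h ▸ hin

/-- Every term lies in the part of its own sort. -/
theorem term_inPart_self (hsplit : sp.sortPart = id) : ∀ {t : Sg.Sorts} (tm : Term Sg t), tm.inPart sp t
  | _, .var s n => by simp [Term.inPart, sortPart_eq hsplit]
  | _, .app f args => by
    refine ⟨(funcCod_eq hsplit f).symm, fun i => ?_⟩
    exact term_inPart_congr
      ((funcDom_eq hsplit f i).trans (funcCod_eq hsplit f).symm)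
      (term_inPart_self hsplit (args i))

/-- Variables free in a part-`l` formula have sort `l`. -/
theorem varOccurs_sort (hsplit : sp.sortPart = id) :
    ∀ {t : Sg.Sorts} (tm : Term Sg t) {l s : Sg.Sorts} {n : ℕ},
      tm.inPart sp l → tm.varOccurs s n → s = l
  | _, .var s' n', l, s, n, hin, hocc => by
    obtain ⟨h1, _⟩ := hocc
    rw [h1, ← sortPart_eq (sp := sp) hsplit s', hin]
  | _, .app f args, l, s, n, hin, hocc => by
    obtain ⟨i, hocc⟩ := hocc
    exact varOccurs_sort hsplit (args i) (hin.2 i) hocc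

theorem varFree_sort (hsplit : sp.sortPart = id) :
    ∀ (φ : Formula Sg) {l s : Sg.Sorts} {n : ℕ},
      φ.inPart sp l → φ.varFree s n → s = l
  | .eq t u, l, s, n, hin, hf => by
    rcases hf with hf | hf
    · exact varOccurs_sort hsplit t hin.2.1 hf
    · exact varOccurs_sort hsplit u hin.2.2 hf
  | .pred P args, l, s, n, hin, hf => by
    obtain ⟨i, hf⟩ := hf
    exact varOccurs_sort hsplit (args i) (hin.2 i) hf
  | .imp φ ψ, l, s, n, hin, hf => by
    rcases hf with hf | hf
    · exact varFree_sort hsplit φ hin.1 hf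
    · exact varFree_sort hsplit ψ hin.2 hf
  | .all s' n' φ, l, s, n, hin, hf => varFree_sort hsplit φ hin.2 hf.1

/-- inPart is closed under the derived connectives. -/
theorem inPart_falsum {l : Sg.Sorts} : (Formula.falsum : Formula Sg).inPart sp l := trivial

theorem inPart_not {l : Sg.Sorts} {φ : Formula Sg} (h : φ.inPart sp l) :
    φ.not.inPart sp l := ⟨h, trivial⟩

theorem inPart_or {l : Sg.Sorts} {φ ψ : Formula Sg} (h1 : φ.inPart sp l) (h2 : ψ.inPart sp l) :
    (φ.or ψ).inPart sp l := ⟨⟨h1, trivial⟩, h2⟩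

theorem inPart_and {l : Sg.Sorts} {φ ψ : Formula Sg} (h1 : φ.inPart sp l) (h2 : ψ.inPart sp l) :
    (φ.and ψ).inPart sp l := ⟨⟨h1, h2, trivial⟩, trivial⟩

theorem inPart_orList {l : Sg.Sorts} {L : List (Formula Sg)} (h : ∀ φ ∈ L, φ.inPart sp l) :
    (Formula.orList L).inPart sp l := by
  induction L with
  | nil => trivial
  | cons φ L ih =>
    exact inPart_or (h φ (by simp)) (ih fun ψ hψ => h ψ (by simp [hψ]))

theorem inPart_andList {l : Sg.Sorts} {L : List (Formula Sg)} (h : ∀ φ ∈ L, φ.inPart sp l) :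
    (Formula.andList L).inPart sp l := by
  induction L with
  | nil => exact ⟨trivial, trivial⟩
  | cons φ L ih =>
    exact inPart_and (h φ (by simp)) (ih fun ψ hψ => h ψ (by simp [hψ]))

/-! ### free variables of derived connectives -/

theorem varFree_not {φ : Formula Sg} {s n} : φ.not.varFree s n ↔ φ.varFree s n := by
  simp [Formula.not, Formula.varFree]

theorem varFree_or {φ ψ : Formula Sg} {s n} :
    (φ.or ψ).varFree s n ↔ φ.varFree s n ∨ ψ.varFree s n := by
  simp [Formula.or, Formula.varFree, varFree_not]

theorem varFree_and {φ ψ : Formula Sg} {s n} :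
    (φ.and ψ).varFree s n ↔ φ.varFree s n ∨ ψ.varFree s n := by
  simp [Formula.and, Formula.varFree, Formula.not]

theorem varFree_orList {L : List (Formula Sg)} {s n} :
    (Formula.orList L).varFree s n ↔ ∃ φ ∈ L, φ.varFree s n := by
  induction L with
  | nil => simp [Formula.orList, Formula.varFree]
  | cons φ L ih =>
    simp only [Formula.orList, List.foldr] at *
    rw [varFree_or, ih]; simp

theorem varFree_andList {L : List (Formula Sg)} {s n} :
    (Formula.andList L).varFree s n ↔ ∃ φ ∈ L, φ.varFree s n := by
  induction L with
  | nil => simp [Formula.andList, Formula.varFree, Formula.not]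
  | cons φ L ih =>
    simp only [Formula.andList, List.foldr] at *
    rw [varFree_and, ih]; simp


/-! ### Clauses, cubes and normal forms -/

noncomputable section NF
open Classical

variable (Sg) in
/-- A labelled component list. -/
abbrev Clause : Type := List (Sg.Sorts × Formula Sg)

def clForm (c : Clause Sg) : Formula Sg := Formula.orList (c.map Prod.snd)
def cubeForm (c : Clause Sg) : Formula Sg := Formula.andList (c.map Prod.snd)
def cnfForm (C : List (Clause Sg)) : Formula Sg := Formula.andList (C.map clForm)
def dnfForm (C : List (Clause Sg)) : Formula Sg := Formula.orList (C.map cubeForm)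

theorem sat_clForm {A : Structure Sg} {ν : Assign A} {c : Clause Sg} :
    Sat A ν (clForm c) ↔ ∃ p ∈ c, Sat A ν p.2 := by
  simp only [clForm, sat_orList, List.mem_map]
  constructor
  · rintro ⟨ψ, ⟨p, hp, rfl⟩, hs⟩; exact ⟨p, hp, hs⟩
  · rintro ⟨p, hp, hs⟩; exact ⟨p.2, ⟨p, hp, rfl⟩, hs⟩

theorem sat_cubeForm {A : Structure Sg} {ν : Assign A} {c : Clause Sg} :
    Sat A ν (cubeForm c) ↔ ∀ p ∈ c, Sat A ν p.2 := by
  simp only [cubeForm, sat_andList, List.mem_map]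
  constructor
  · rintro h p hp; exact h p.2 ⟨p, hp, rfl⟩
  · rintro h ψ ⟨p, hp, rfl⟩; exact h p hp

theorem sat_cnfForm {A : Structure Sg} {ν : Assign A} {C : List (Clause Sg)} :
    Sat A ν (cnfForm C) ↔ ∀ c ∈ C, Sat A ν (clForm c) := by
  simp [cnfForm, sat_andList]

theorem sat_dnfForm {A : Structure Sg} {ν : Assign A} {C : List (Clause Sg)} :
    Sat A ν (dnfForm C) ↔ ∃ c ∈ C, Sat A ν (cubeForm c) := by
  simp [dnfForm, sat_orList]

theorem sat_single_cnf {A : Structure Sg} {ν : Assign A} {l : Sg.Sorts} {φ : Formula Sg} :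
    Sat A ν (cnfForm [[(l, φ)]]) ↔ Sat A ν φ := by
  rw [sat_cnfForm]
  constructor
  · intro h
    obtain ⟨p, hp, hs⟩ := sat_clForm.1 (h [(l, φ)] (by simp))
    rw [List.mem_singleton] at hp
    subst hp; exact hs
  · intro h c hc
    rw [List.mem_singleton] at hc
    subst hc
    exact sat_clForm.2 ⟨(l, φ), by simp, h⟩

theorem sat_single_dnf {A : Structure Sg} {ν : Assign A} {l : Sg.Sorts} {φ : Formula Sg} :
    Sat A ν (dnfForm [[(l, φ)]]) ↔ Sat A ν φ := by
  rw [sat_dnfForm]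
  constructor
  · rintro ⟨c, hc, hs⟩
    rw [List.mem_singleton] at hc
    subst hc
    exact sat_cubeForm.1 hs (l, φ) (by simp)
  · intro h
    refine ⟨[(l, φ)], by simp, sat_cubeForm.2 ?_⟩
    rintro p hp
    rw [List.mem_singleton] at hp
    subst hp; exact h

/-- Merge components with a common label, disjunctively. -/
def mergeOr (c : Clause Sg) : Clause Sg :=
  (c.map Prod.fst).dedup.map
    (fun l => (l, Formula.orList ((c.filter (fun p => p.1 = l)).map Prod.snd)))

/-- Merge components with a common label, conjunctively. -/
def mergeAnd (c : Clause Sg) : Clause Sg :=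
  (c.map Prod.fst).dedup.map
    (fun l => (l, Formula.andList ((c.filter (fun p => p.1 = l)).map Prod.snd)))

theorem merge_keys_nodup {c : Clause Sg} :
    ((mergeOr c).map Prod.fst).Nodup ∧ ((mergeAnd c).map Prod.fst).Nodup := by
  constructor
  · have h : (mergeOr c).map Prod.fst = (c.map Prod.fst).dedup := by
      simp [mergeOr, List.map_map, Function.comp_def]
    rw [h]; exact (c.map Prod.fst).nodup_dedup
  · have h : (mergeAnd c).map Prod.fst = (c.map Prod.fst).dedup := by
      simp [mergeAnd, List.map_map, Function.comp_def]
    rw [h]; exact (c.map Prod.fst).nodup_dedup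

theorem mem_merge_src {c : Clause Sg} {p : Sg.Sorts × Formula Sg}
    (h : p ∈ mergeOr c ∨ p ∈ mergeAnd c) :
    ∃ L : List (Formula Sg), (∀ ψ ∈ L, (p.1, ψ) ∈ c) ∧
      (p.2 = Formula.orList L ∨ p.2 = Formula.andList L) := by
  rcases h with h | h <;>
  · simp only [mergeOr, mergeAnd, List.mem_map] at h
    obtain ⟨l, -, rfl⟩ := h
    refine ⟨(c.filter (fun p => p.1 = l)).map Prod.snd, fun ψ hψ => ?_, by simp⟩
    simp only [List.mem_map, List.mem_filter] at hψ
    obtain ⟨q, ⟨hq, hql⟩, rfl⟩ := hψ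
    have : q.1 = l := by simpa using hql
    simpa [← this] using hq

theorem sat_mergeOr {A : Structure Sg} {ν : Assign A} {c : Clause Sg} :
    Sat A ν (clForm (mergeOr c)) ↔ Sat A ν (clForm c) := by
  simp only [sat_clForm, mergeOr, List.mem_map, List.mem_dedup]
  constructor
  · rintro ⟨p, ⟨l, hl, rfl⟩, hsat⟩
    rw [sat_orList] at hsat
    obtain ⟨ψ, hψ, hs⟩ := hsat
    simp only [List.mem_map, List.mem_filter] at hψ
    obtain ⟨q, ⟨hq, -⟩, rfl⟩ := hψ
    exact ⟨q, hq, hs⟩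
  · rintro ⟨p, hp, hsat⟩
    refine ⟨(p.1, Formula.orList ((c.filter (fun q => q.1 = p.1)).map Prod.snd)),
      ⟨p.1, by simpa [List.mem_dedup] using List.mem_map_of_mem (f := Prod.fst) hp, rfl⟩, ?_⟩
    rw [sat_orList]
    exact ⟨p.2, by simp [List.mem_filter, hp], hsat⟩

theorem sat_mergeAnd {A : Structure Sg} {ν : Assign A} {c : Clause Sg} :
    Sat A ν (cubeForm (mergeAnd c)) ↔ Sat A ν (cubeForm c) := by
  simp only [sat_cubeForm, mergeAnd, List.mem_map, List.mem_dedup]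
  constructor
  · rintro h p hp
    have := h (p.1, Formula.andList ((c.filter (fun q => q.1 = p.1)).map Prod.snd))
      ⟨p.1, by simpa [List.mem_dedup] using List.mem_map_of_mem (f := Prod.fst) hp, rfl⟩
    rw [sat_andList] at this
    exact this p.2 (by simp [List.mem_filter, hp])
  · rintro h p ⟨l, hl, rfl⟩
    rw [sat_andList]
    intro ψ hψ
    simp only [List.mem_map, List.mem_filter] at hψ
    obtain ⟨q, ⟨hq, -⟩, rfl⟩ := hψ
    exact h q hq

/-- Goodness of a clause with respect to a free-variable bound. -/
def GoodC (sp : Split Sg Sg.Sorts) (F : Sg.Sorts → ℕ → Prop) (c : Clause Sg) : Prop :=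
  (c.map Prod.fst).Nodup ∧
    ∀ p ∈ c, p.2.inPart sp p.1 ∧ ∀ t m, p.2.varFree t m → F t m

theorem GoodC.mono {sp : Split Sg Sg.Sorts} {F G : Sg.Sorts → ℕ → Prop}
    (h : ∀ t m, F t m → G t m) {c : Clause Sg} (hc : GoodC sp F c) : GoodC sp G c :=
  ⟨hc.1, fun p hp => ⟨(hc.2 p hp).1, fun t m hf => h t m ((hc.2 p hp).2 t m hf)⟩⟩

theorem GoodC_mergeOr {sp : Split Sg Sg.Sorts} {F} {c : Clause Sg}
    (hc : ∀ p ∈ c, p.2.inPart sp p.1 ∧ ∀ t m, p.2.varFree t m → F t m) :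
    GoodC sp F (mergeOr c) := by
  refine ⟨merge_keys_nodup.1, fun p hp => ?_⟩
  obtain ⟨L, hL, hor⟩ := mem_merge_src (Or.inl hp)
  rcases hor with h2 | h2 <;> rw [h2]
  · refine ⟨inPart_orList (fun ψ hψ => (hc _ (hL ψ hψ)).1), fun t m hf => ?_⟩
    rw [varFree_orList] at hf
    obtain ⟨ψ, hψ, hf⟩ := hf
    exact (hc _ (hL ψ hψ)).2 t m hf
  · refine ⟨inPart_andList (fun ψ hψ => (hc _ (hL ψ hψ)).1), fun t m hf => ?_⟩
    rw [varFree_andList] at hf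
    obtain ⟨ψ, hψ, hf⟩ := hf
    exact (hc _ (hL ψ hψ)).2 t m hf

theorem GoodC_mergeAnd {sp : Split Sg Sg.Sorts} {F} {c : Clause Sg}
    (hc : ∀ p ∈ c, p.2.inPart sp p.1 ∧ ∀ t m, p.2.varFree t m → F t m) :
    GoodC sp F (mergeAnd c) := by
  refine ⟨merge_keys_nodup.2, fun p hp => ?_⟩
  obtain ⟨L, hL, hor⟩ := mem_merge_src (Or.inr hp)
  rcases hor with h2 | h2 <;> rw [h2]
  · refine ⟨inPart_orList (fun ψ hψ => (hc _ (hL ψ hψ)).1), fun t m hf => ?_⟩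
    rw [varFree_orList] at hf
    obtain ⟨ψ, hψ, hf⟩ := hf
    exact (hc _ (hL ψ hψ)).2 t m hf
  · refine ⟨inPart_andList (fun ψ hψ => (hc _ (hL ψ hψ)).1), fun t m hf => ?_⟩
    rw [varFree_andList] at hf
    obtain ⟨ψ, hψ, hf⟩ := hf
    exact (hc _ (hL ψ hψ)).2 t m hf

/-- Distributing a universal quantifier over a conjunction of clauses. -/
theorem sections_choice {α : Type*} (Q : α → Prop) :
    ∀ (C : List (List α)), (∀ c ∈ C, ∃ p ∈ c, Q p) ↔ ∃ s ∈ C.sections, ∀ p ∈ s, Q p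
  | [] => by simp [List.sections]
  | c :: C => by
    constructor
    · intro h
      obtain ⟨p, hp, hQ⟩ := h c (by simp)
      obtain ⟨sec, hsec, hall⟩ := (sections_choice Q C).1 (fun d hd => h d (by simp [hd]))
      refine ⟨p :: sec, ?_, ?_⟩
      · rw [List.mem_sections] at *
        exact List.Forall₂.cons hp hsec
      · intro q hq
        rcases List.mem_cons.1 hq with rfl | hq
        · exact hQ
        · exact hall q hq
    · rintro ⟨sec, hsec, hall⟩ d hd
      rw [List.mem_sections] at hsec
      rcases List.mem_cons.1 hd with rfl | hd
      · cases hsec with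
        | cons hp _ => exact ⟨_, hp, hall _ (by simp)⟩
      · cases hsec with
        | cons _ htl =>
          refine (sections_choice Q C).2 ⟨_, List.mem_sections.2 htl, ?_⟩ d hd
          intro q hq; exact hall q (by simp [hq])

theorem mem_of_mem_sections {α : Type*} {C : List (List α)} {sec : List α}
    (hsec : sec ∈ C.sections) {p : α} (hp : p ∈ sec) : ∃ c ∈ C, p ∈ c := by
  rw [List.mem_sections] at hsec
  induction hsec with
  | nil => cases hp
  | cons h _ ih =>
    rcases List.mem_cons.1 hp with rfl | hp
    · exact ⟨_, by simp, h⟩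
    · obtain ⟨c, hc, hpc⟩ := ih hp
      exact ⟨c, by simp [hc], hpc⟩

/-- Pushing a universal quantifier into a clause with pairwise distinct labels. -/
theorem sat_all_clause {sp : Split Sg Sg.Sorts} (hsplit : sp.sortPart = id)
    {A : Structure Sg} {ν : Assign A} {s : Sg.Sorts} {n : ℕ} {c : Clause Sg}
    (hnd : (c.map Prod.fst).Nodup) (hin : ∀ p ∈ c, (p.2).inPart sp p.1) :
    (∀ a : A.dom s, Sat A (ν.update s n a) (clForm c)) ↔
      Sat A ν (clForm (c.map (fun p => if p.1 = s then (p.1, Formula.all s n p.2) else p))) := by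
  have hcongr : ∀ p ∈ c, p.1 ≠ s → ∀ a : A.dom s,
      (Sat A (ν.update s n a) p.2 ↔ Sat A ν p.2) := by
    intro p hp hps a
    refine sat_congr p.2 (fun t m hf => ?_)
    have ht : t = p.1 := varFree_sort hsplit p.2 (hin p hp) hf
    exact update_out ν _ (fun h => hps (ht.symm.trans h.1))
  constructor
  · intro h
    by_cases hex : ∃ p ∈ c, p.1 ≠ s ∧ Sat A ν p.2
    · obtain ⟨p, hp, hps, hsat⟩ := hex
      rw [sat_clForm]
      exact ⟨p, by
        refine List.mem_map.2 ⟨p, hp, ?_⟩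
        simp [hps], hsat⟩
    · push_neg at hex
      by_cases hs : ∃ p ∈ c, p.1 = s
      · obtain ⟨p0, hp0, hp0s⟩ := hs
        rw [sat_clForm]
        refine ⟨(p0.1, Formula.all s n p0.2), List.mem_map.2 ⟨p0, hp0, by simp [hp0s]⟩, ?_⟩
        subst hp0s
        intro a
        obtain ⟨p, hp, hsat⟩ := sat_clForm.1 (h a)
        by_cases hps : p.1 = p0.1
        · have : p = p0 := List.inj_on_of_nodup_map hnd hp hp0 hps
          exact this ▸ hsat
        · exact absurd ((hcongr p hp hps a).1 hsat) (hex p hp hps)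
      · push_neg at hs
        obtain ⟨a⟩ := A.dom_nonempty s
        obtain ⟨p, hp, hsat⟩ := sat_clForm.1 (h a)
        exact absurd ((hcongr p hp (hs p hp) a).1 hsat) (hex p hp (hs p hp))
  · intro h a
    obtain ⟨p', hp', hsat⟩ := sat_clForm.1 h
    obtain ⟨p, hp, heq⟩ := List.mem_map.1 hp'
    rw [sat_clForm]
    by_cases hps : p.1 = s
    · rw [if_pos hps] at heq
      subst heq
      exact ⟨p, hp, hsat a⟩
    · rw [if_neg hps] at heq
      subst heq
      exact ⟨p, hp, (hcongr p hp hps a).2 hsat⟩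

variable {sp : Split Sg Sg.Sorts}

/-- The full normal-form theorem: every formula is equivalent to a CNF and a DNF
built from labelled parts, with free variables controlled. -/
theorem normal_form (hsplit : sp.sortPart = id) :
    ∀ φ : Formula Sg,
      (∃ C : List (Clause Sg), (∀ c ∈ C, GoodC sp φ.varFree c) ∧
        ∀ (A : Structure Sg) (ν : Assign A), Sat A ν φ ↔ Sat A ν (cnfForm C)) ∧
      (∃ D : List (Clause Sg), (∀ c ∈ D, GoodC sp φ.varFree c) ∧
        ∀ (A : Structure Sg) (ν : Assign A), Sat A ν φ ↔ Sat A ν (dnfForm D))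
  | .falsum => by
    constructor
    · exact ⟨[[]], by simp [GoodC, clForm], fun A ν => by
        simp [sat_cnfForm, sat_clForm, Sat]⟩
    · exact ⟨[], by simp, fun A ν => by simp [sat_dnfForm, Sat]⟩
  | .eq (s := t) a b => by
    have hgood : ∀ c ∈ [[(t, Formula.eq a b)]], GoodC sp (Formula.eq a b).varFree c := by
      rintro c hc
      simp only [List.mem_singleton] at hc
      subst hc
      refine ⟨by simp, ?_⟩
      rintro p hp
      simp only [List.mem_singleton] at hp
      subst hp
      exact ⟨⟨sortPart_eq hsplit t, term_inPart_self hsplit a, term_inPart_self hsplit b⟩,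
        fun _ _ h => h⟩
    constructor
    · exact ⟨[[(t, Formula.eq a b)]], hgood, fun A ν => sat_single_cnf.symm⟩
    · exact ⟨[[(t, Formula.eq a b)]], hgood, fun A ν => sat_single_dnf.symm⟩
  | .pred P args => by
    have hgood : ∀ c ∈ [[(sp.predPart P, Formula.pred P args)]],
        GoodC sp (Formula.pred P args).varFree c := by
      rintro c hc
      simp only [List.mem_singleton] at hc
      subst hc
      refine ⟨by simp, ?_⟩
      rintro p hp
      simp only [List.mem_singleton] at hp
      subst hp
      refine ⟨⟨rfl, fun i => term_inPart_congr (predDom_eq hsplit P i)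
        (term_inPart_self hsplit (args i))⟩, fun _ _ h => h⟩
    constructor
    · exact ⟨[[(sp.predPart P, Formula.pred P args)]], hgood, fun A ν => sat_single_cnf.symm⟩
    · exact ⟨[[(sp.predPart P, Formula.pred P args)]], hgood, fun A ν => sat_single_dnf.symm⟩
  | .imp φ ψ => by
    obtain ⟨⟨Cφ, hCφ, hCφe⟩, ⟨Dφ, hDφ, hDφe⟩⟩ := normal_form hsplit φ
    obtain ⟨⟨Cψ, hCψ, hCψe⟩, ⟨Dψ, hDψ, hDψe⟩⟩ := normal_form hsplit ψ
    -- the negation of the DNF of φ, as a CNF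
    set negC : List (Clause Sg) := Dφ.map (fun cube => mergeOr (cube.map
      (fun p => (p.1, (p.2).not)))) with hnegC
    have negC_good : ∀ c ∈ negC, GoodC sp (Formula.imp φ ψ).varFree c := by
      rintro c hc
      rw [hnegC, List.mem_map] at hc
      obtain ⟨cube, hcube, rfl⟩ := hc
      refine GoodC_mergeOr ?_
      rintro p hp
      rw [List.mem_map] at hp
      obtain ⟨q, hq, rfl⟩ := hp
      refine ⟨inPart_not ((hDφ cube hcube).2 q hq).1, fun t m hf => ?_⟩
      rw [varFree_not] at hf
      exact Or.inl (((hDφ cube hcube).2 q hq).2 t m hf)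
    have negC_sat : ∀ (A : Structure Sg) (ν : Assign A),
        (¬ Sat A ν φ) ↔ Sat A ν (cnfForm negC) := by
      intro A ν
      constructor
      · intro h
        rw [sat_cnfForm]
        intro c hc
        rw [hnegC, List.mem_map] at hc
        obtain ⟨cube, hcube, rfl⟩ := hc
        have hnc : ¬ Sat A ν (cubeForm cube) :=
          fun hs => h ((hDφe A ν).2 (sat_dnfForm.2 ⟨cube, hcube, hs⟩))
        have h2 : ¬ ∀ p ∈ cube, Sat A ν p.2 := fun hall => hnc (sat_cubeForm.2 hall)
        push_neg at h2
        obtain ⟨p, hp, hps⟩ := h2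
        rw [sat_mergeOr, sat_clForm]
        exact ⟨(p.1, (p.2).not), List.mem_map.2 ⟨p, hp, rfl⟩, sat_not.2 hps⟩
      · intro h hφ
        obtain ⟨cube, hcube, hs⟩ := sat_dnfForm.1 ((hDφe A ν).1 hφ)
        have h2 := sat_cnfForm.1 h (mergeOr (cube.map (fun p => (p.1, (p.2).not))))
          (List.mem_map.2 ⟨cube, hcube, rfl⟩)
        rw [sat_mergeOr, sat_clForm] at h2
        obtain ⟨p', hp', hps⟩ := h2
        obtain ⟨p, hp, rfl⟩ := List.mem_map.1 hp'
        exact sat_not.1 hps (sat_cubeForm.1 hs p hp)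
    -- negation of the CNF of φ, as a DNF
    set negD : List (Clause Sg) := Cφ.map (fun cl => mergeAnd (cl.map
      (fun p => (p.1, (p.2).not)))) with hnegD
    have negD_good : ∀ c ∈ negD, GoodC sp (Formula.imp φ ψ).varFree c := by
      rintro c hc
      rw [hnegD, List.mem_map] at hc
      obtain ⟨cl, hcl, rfl⟩ := hc
      refine GoodC_mergeAnd ?_
      rintro p hp
      rw [List.mem_map] at hp
      obtain ⟨q, hq, rfl⟩ := hp
      refine ⟨inPart_not ((hCφ cl hcl).2 q hq).1, fun t m hf => ?_⟩
      rw [varFree_not] at hf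
      exact Or.inl (((hCφ cl hcl).2 q hq).2 t m hf)
    have negD_sat : ∀ (A : Structure Sg) (ν : Assign A),
        (¬ Sat A ν φ) ↔ Sat A ν (dnfForm negD) := by
      intro A ν
      rw [hCφe A ν, sat_cnfForm, sat_dnfForm]
      constructor
      · intro h
        have : ¬ ∀ cl ∈ Cφ, ∃ p ∈ cl, Sat A ν p.2 := by
          intro hall; exact h (fun cl hcl => sat_clForm.2 (hall cl hcl))
        push_neg at this
        obtain ⟨cl, hcl, hps⟩ := this
        refine ⟨mergeAnd (cl.map (fun p => (p.1, (p.2).not))),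
          List.mem_map.2 ⟨cl, hcl, rfl⟩, ?_⟩
        rw [sat_mergeAnd, sat_cubeForm]
        rintro p' hp'
        obtain ⟨p, hp, rfl⟩ := List.mem_map.1 hp'
        exact sat_not.2 (hps p hp)
      · rintro ⟨c, hc, hsat⟩ hall
        rw [hnegD, List.mem_map] at hc
        obtain ⟨cl, hcl, rfl⟩ := hc
        rw [sat_mergeAnd, sat_cubeForm] at hsat
        obtain ⟨p, hp, hps⟩ := sat_clForm.1 (hall cl hcl)
        exact sat_not.1 (hsat (p.1, (p.2).not) (List.mem_map.2 ⟨p, hp, rfl⟩)) hps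
    refine ⟨⟨negC.flatMap (fun c1 => Cψ.map fun c2 => mergeOr (c1 ++ c2)), ?_, ?_⟩,
      ⟨negD ++ Dψ, ?_, ?_⟩⟩
    · rintro c hc
      rw [List.mem_flatMap] at hc
      obtain ⟨c1, hc1, hc⟩ := hc
      obtain ⟨c2, hc2, rfl⟩ := List.mem_map.1 hc
      refine GoodC_mergeOr ?_
      rintro p hp
      rcases List.mem_append.1 hp with hp | hp
      · exact (negC_good c1 hc1).2 p hp
      · refine ⟨((hCψ c2 hc2).2 p hp).1, fun t m hf => Or.inr (((hCψ c2 hc2).2 p hp).2 t m hf)⟩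
    · intro A ν
      have himp : Sat A ν (Formula.imp φ ψ) ↔ (¬ Sat A ν φ ∨ Sat A ν ψ) := by
        simp only [Sat]; tauto
      rw [himp, negC_sat A ν, hCψe A ν, sat_cnfForm (C := negC), sat_cnfForm (C := Cψ), sat_cnfForm]
      constructor
      · intro h c hc
        rw [List.mem_flatMap] at hc
        obtain ⟨c1, hc1, hc⟩ := hc
        obtain ⟨c2, hc2, rfl⟩ := List.mem_map.1 hc
        rw [sat_mergeOr, sat_clForm]
        rcases h with h | h
        · obtain ⟨p, hp, hps⟩ := sat_clForm.1 (h c1 hc1)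
          exact ⟨p, List.mem_append.2 (Or.inl hp), hps⟩
        · obtain ⟨p, hp, hps⟩ := sat_clForm.1 (h c2 hc2)
          exact ⟨p, List.mem_append.2 (Or.inr hp), hps⟩
      · intro h
        by_cases h1 : ∀ c1 ∈ negC, Sat A ν (clForm c1)
        · exact Or.inl h1
        · push_neg at h1
          obtain ⟨c1, hc1, hns⟩ := h1
          refine Or.inr (fun c2 hc2 => ?_)
          have := h (mergeOr (c1 ++ c2))
            (List.mem_flatMap.2 ⟨c1, hc1, List.mem_map.2 ⟨c2, hc2, rfl⟩⟩)
          rw [sat_mergeOr, sat_clForm] at this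
          obtain ⟨p, hp, hps⟩ := this
          rcases List.mem_append.1 hp with hp | hp
          · exact absurd (sat_clForm.2 ⟨p, hp, hps⟩) hns
          · exact sat_clForm.2 ⟨p, hp, hps⟩
    · rintro c hc
      rcases List.mem_append.1 hc with hc | hc
      · exact negD_good c hc
      · exact (hDψ c hc).mono (fun t m hf => Or.inr hf)
    · intro A ν
      have himp : Sat A ν (Formula.imp φ ψ) ↔ (¬ Sat A ν φ ∨ Sat A ν ψ) := by
        simp only [Sat]; tauto
      rw [himp, negD_sat A ν, hDψe A ν, sat_dnfForm, sat_dnfForm, sat_dnfForm]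
      constructor
      · rintro (⟨c, hc, hs⟩ | ⟨c, hc, hs⟩)
        · exact ⟨c, List.mem_append.2 (Or.inl hc), hs⟩
        · exact ⟨c, List.mem_append.2 (Or.inr hc), hs⟩
      · rintro ⟨c, hc, hs⟩
        rcases List.mem_append.1 hc with hc | hc
        · exact Or.inl ⟨c, hc, hs⟩
        · exact Or.inr ⟨c, hc, hs⟩
  | .all s n φ => by
    obtain ⟨⟨Cφ, hCφ, hCφe⟩, -⟩ := normal_form hsplit φ
    set C : List (Clause Sg) := Cφ.map
      (fun c => c.map (fun p => if p.1 = s then (p.1, Formula.all s n p.2) else p)) with hC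
    have hCgood : ∀ c ∈ C, GoodC sp (Formula.all s n φ).varFree c := by
      rintro c hc
      rw [hC, List.mem_map] at hc
      obtain ⟨c0, hc0, rfl⟩ := hc
      have keys : (c0.map (fun p => if p.1 = s then (p.1, Formula.all s n p.2) else p)).map
          Prod.fst = c0.map Prod.fst := by
        rw [List.map_map]
        refine List.map_congr_left (fun p _ => ?_)
        by_cases hps : p.1 = s <;> simp [hps]
      refine ⟨by rw [keys]; exact (hCφ c0 hc0).1, ?_⟩
      rintro p hp
      rw [List.mem_map] at hp
      obtain ⟨q, hq, rfl⟩ := hp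
      obtain ⟨hqin, hqf⟩ := (hCφ c0 hc0).2 q hq
      by_cases hqs : q.1 = s
      · rw [if_pos hqs]
        refine ⟨⟨hqs ▸ sortPart_eq hsplit s, hqs ▸ hqin⟩, ?_⟩
        rintro t m ⟨hf, hne⟩
        exact ⟨hqf t m hf, hne⟩
      · rw [if_neg hqs]
        refine ⟨hqin, fun t m hf => ?_⟩
        have ht : t = q.1 := varFree_sort hsplit q.2 hqin hf
        exact ⟨hqf t m hf, fun he => hqs ((ht.symm.trans he.1) ▸ rfl)⟩
    have hCe : ∀ (A : Structure Sg) (ν : Assign A),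
        Sat A ν (Formula.all s n φ) ↔ Sat A ν (cnfForm C) := by
      intro A ν
      have h1 : Sat A ν (Formula.all s n φ) ↔
          ∀ c0 ∈ Cφ, ∀ a : A.dom s, Sat A (ν.update s n a) (clForm c0) := by
        constructor
        · intro h c0 hc0 a
          exact sat_cnfForm.1 ((hCφe A _).1 (h a)) c0 hc0
        · intro h a
          exact (hCφe A _).2 (sat_cnfForm.2 (fun c0 hc0 => h c0 hc0 a))
      rw [h1, sat_cnfForm]
      constructor
      · intro h c hc
        rw [hC, List.mem_map] at hc
        obtain ⟨c0, hc0, rfl⟩ := hc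
        exact (sat_all_clause hsplit (hCφ c0 hc0).1
          (fun p hp => ((hCφ c0 hc0).2 p hp).1)).1 (h c0 hc0)
      · intro h c0 hc0
        exact (sat_all_clause hsplit (hCφ c0 hc0).1
          (fun p hp => ((hCφ c0 hc0).2 p hp).1)).2
          (h _ (List.mem_map.2 ⟨c0, hc0, rfl⟩))
    refine ⟨⟨C, hCgood, hCe⟩, ⟨C.sections.map mergeAnd, ?_, ?_⟩⟩
    · rintro c hc
      rw [List.mem_map] at hc
      obtain ⟨sec, hsec, rfl⟩ := hc
      refine GoodC_mergeAnd (fun p hp => ?_)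
      obtain ⟨c, hc, hpc⟩ := mem_of_mem_sections hsec hp
      exact (hCgood c hc).2 p hpc
    · intro A ν
      rw [hCe A ν, sat_cnfForm, sat_dnfForm]
      have := sections_choice (fun p : Sg.Sorts × Formula Sg => Sat A ν p.2) C
      constructor
      · intro h
        obtain ⟨sec, hsec, hall⟩ := this.1 (fun c hc => sat_clForm.1 (h c hc))
        exact ⟨mergeAnd sec, List.mem_map.2 ⟨sec, hsec, rfl⟩,
          sat_mergeAnd.2 (sat_cubeForm.2 hall)⟩
      · rintro ⟨c, hc, hsat⟩ d hd
        rw [List.mem_map] at hc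
        obtain ⟨sec, hsec, rfl⟩ := hc
        rw [sat_mergeAnd, sat_cubeForm] at hsat
        exact sat_clForm.2 (this.2 ⟨sec, hsec, hsat⟩ d hd)

/-- Agreement on single-part formulas transfers to all sentences. -/
theorem transfer (hsplit : sp.sortPart = id) {A B : Structure Sg}
    (hagree : ∀ (l : Sg.Sorts) (ψ : Formula Sg), ψ.inPart sp l →
      ((∀ ν : Assign A, Sat A ν ψ) ↔ (∀ ν : Assign B, Sat B ν ψ)))
    {φ : Formula Sg} (hφ : φ.IsSentence) :
    (∀ ν : Assign A, Sat A ν φ) ↔ (∀ ν : Assign B, Sat B ν φ) := by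
  obtain ⟨⟨C, hgood, he⟩, -⟩ := normal_form hsplit φ
  have hclosed : ∀ c ∈ C, ∀ p ∈ c, ∀ t m, ¬ (p.2).varFree t m := by
    intro c hc p hp t m hf
    exact hφ t m (((hgood c hc).2 p hp).2 t m hf)
  have key : ∀ (X : Structure Sg),
      (∀ ν : Assign X, Sat X ν φ) ↔ ∀ c ∈ C, ∃ p ∈ c, ∀ ν : Assign X, Sat X ν p.2 := by
    intro X
    have νX : Assign X := fun s _ => Classical.choice (X.dom_nonempty s)
    constructor
    · intro h c hc
      obtain ⟨p, hp, hs⟩ := sat_clForm.1 (sat_cnfForm.1 ((he X νX).1 (h νX)) c hc)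
      exact ⟨p, hp, fun ν => (sat_closed (hclosed c hc p hp)).1 hs⟩
    · intro h ν
      refine (he X ν).2 (sat_cnfForm.2 (fun c hc => ?_))
      obtain ⟨p, hp, hs⟩ := h c hc
      exact sat_clForm.2 ⟨p, hp, hs ν⟩
  rw [key A, key B]
  refine forall_congr' fun c => forall_congr' fun hc => exists_congr fun p => ?_
  refine and_congr_right fun hp => ?_
  exact hagree p.1 p.2 ((hgood c hc).2 p hp).1

end NF

/-! ### The one-sorted Mathlib language of a part -/

open FirstOrder FirstOrder.Language
open Classical

/-- Transport along an equality of sorts. -/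
def dcast {D : Sg.Sorts → Type} {a b : Sg.Sorts} (h : a = b) (x : D a) : D b := h ▸ x

@[simp] theorem dcast_rfl {D : Sg.Sorts → Type} {a : Sg.Sorts} (x : D a) :
    dcast (D := D) rfl x = x := rfl

theorem dcast_dcast {D : Sg.Sorts → Type} {a b : Sg.Sorts} (h : a = b) (h' : b = a)
    (x : D a) : dcast (D := D) h' (dcast (D := D) h x) = x := by cases h; rfl

theorem dcast_eq_iff {D : Sg.Sorts → Type} {a b : Sg.Sorts} (h : a = b)
    {x : D a} {y : D b} : dcast (D := D) h x = y ↔ x = dcast (D := D) h.symm y := by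
  cases h; exact Iff.rfl

variable (sp) in
/-- The one-sorted language associated with the part `s`. -/
def partLang (s : Sg.Sorts) : FirstOrder.Language.{0, 0} where
  Functions n := {f : Sg.Func // sp.funcPart f = s ∧ (Sg.funcDom f).length = n}
  Relations n := {P : Sg.Pred // sp.predPart P = s ∧ (Sg.predDom P).length = n}

/-- The one-sorted structure on `A.dom s` induced by a many-sorted structure. -/
def partStr (hsplit : sp.sortPart = id) (A : Structure Sg) (s : Sg.Sorts) :
    (partLang sp s).Structure (A.dom s) where
  funMap {n} g x :=
    dcast (D := A.dom) ((funcCod_eq hsplit g.1).trans g.2.1)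
      (A.interpFunc g.1 (fun i =>
        dcast (D := A.dom) ((funcDom_eq hsplit g.1 i).trans g.2.1).symm
          (x (Fin.cast g.2.2 i))))
  RelMap {n} r x :=
    A.interpPred r.1 (fun i =>
      dcast (D := A.dom) ((predDom_eq hsplit r.1 i).trans r.2.1).symm
        (x (Fin.cast r.2.2 i)))

variable (sp) in
/-- Translation of a many-sorted term into the one-sorted language of part `s`. -/
noncomputable def trT (s : Sg.Sorts) : ∀ {t : Sg.Sorts}, Term Sg t → (partLang sp s).Term ℕ
  | _, .var _ n => FirstOrder.Language.Term.var n
  | _, .app f args =>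
    if h : sp.funcPart f = s then
      FirstOrder.Language.Term.func (L := partLang sp s)
        (⟨f, h, rfl⟩ : (partLang sp s).Functions (Sg.funcDom f).length)
        (fun i => trT s (args i))
    else FirstOrder.Language.Term.var 0

theorem trT_realize (hsplit : sp.sortPart = id) (A : Structure Sg) (s : Sg.Sorts)
    (ν : Assign A) :
    ∀ {t : Sg.Sorts} (tm : Term Sg t) (h : t = s), tm.inPart sp s →
      (@FirstOrder.Language.Term.realize (partLang sp s) (A.dom s) (partStr hsplit A s) ℕ
        (fun n => ν s n) (trT sp s tm)) = dcast (D := A.dom) h (tm.eval ν)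
  | _, .var t n, h, hin => by subst h; rfl
  | _, .app f args, h, hin => by
    obtain ⟨hf, hargs⟩ := hin
    letI : (partLang sp s).Structure (A.dom s) := partStr hsplit A s
    rw [trT, dif_pos hf]
    show (partStr hsplit A s).funMap _ _ = _
    rw [partStr]
    simp only
    have harg : ∀ i : Fin (Sg.funcDom f).length,
        (@FirstOrder.Language.Term.realize (partLang sp s) (A.dom s) (partStr hsplit A s) ℕ
          (fun n => ν s n) (trT sp s (args (Fin.cast rfl i)))) =
        dcast (D := A.dom) ((funcDom_eq hsplit f i).trans hf) ((args i).eval ν) := by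
      intro i
      have : Fin.cast rfl i = i := rfl
      rw [this]
      exact trT_realize hsplit A s ν (args i) ((funcDom_eq hsplit f i).trans hf) (hargs i)
    have : (fun i => dcast (D := A.dom) (((funcDom_eq hsplit f i).trans hf)).symm
        ((@FirstOrder.Language.Term.realize (partLang sp s) (A.dom s) (partStr hsplit A s) ℕ
          (fun n => ν s n) (trT sp s (args (Fin.cast rfl i)))))) =
        (fun i => (args i).eval ν) := by
      funext i
      rw [harg i, dcast_dcast]
    exact congrArg (fun g => dcast (D := A.dom) h (A.interpFunc f g)) this

variable (sp) in
/-- Translation of a many-sorted formula into the one-sorted language of part `s`. -/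
noncomputable def trF (s : Sg.Sorts) : Formula Sg → (partLang sp s).Formula ℕ
  | .eq (s := t) a b =>
    if t = s then FirstOrder.Language.Term.equal (trT sp s a) (trT sp s b) else ⊥
  | .pred P args =>
    if h : sp.predPart P = s then
      FirstOrder.Language.Relations.formula
        (⟨P, h, rfl⟩ : (partLang sp s).Relations (Sg.predDom P).length)
        (fun i => trT sp s (args i))
    else ⊥
  | .falsum => ⊥
  | .imp φ ψ => (trF s φ).imp (trF s ψ)
  | .all t n φ =>
    if t = s then
      ((trF s φ).relabel (fun m => if m = n then Sum.inr () else Sum.inl m)).iAlls Unit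
    else trF s φ

theorem trF_realize (hsplit : sp.sortPart = id) (A : Structure Sg) (s : Sg.Sorts) :
    ∀ (φ : Formula Sg), φ.inPart sp s → ∀ ν : Assign A,
      (@FirstOrder.Language.Formula.Realize (partLang sp s) (A.dom s) (partStr hsplit A s) ℕ
        (trF sp s φ) (fun n => ν s n)) ↔ Sat A ν φ
  | .eq (s := t) a b, hin, ν => by
    obtain ⟨ht, ha, hb⟩ := hin
    have h : t = s := by rw [← sortPart_eq (sp := sp) hsplit t, ht]
    subst h
    rw [trF, if_pos rfl]
    rw [@FirstOrder.Language.Formula.realize_equal (partLang sp t) (A.dom t)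
      (partStr hsplit A t)]
    rw [trT_realize hsplit A t ν a rfl ha, trT_realize hsplit A t ν b rfl hb]
    simp only [dcast_rfl]
    exact Iff.rfl
  | .pred P args, hin, ν => by
    obtain ⟨hP, hargs⟩ := hin
    rw [trF]
    rw [dif_pos hP]
    show (partStr hsplit A s).RelMap _ _ ↔ _
    rw [partStr]
    simp only
    have : (fun i => dcast (D := A.dom) (((predDom_eq hsplit P i).trans hP)).symm
        ((@FirstOrder.Language.Term.realize (partLang sp s) (A.dom s) (partStr hsplit A s) ℕ
          (fun n => ν s n) (trT sp s (args (Fin.cast rfl i)))))) =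
        (fun i => (args i).eval ν) := by
      funext i
      have hc : Fin.cast rfl i = i := rfl
      rw [hc, trT_realize hsplit A s ν (args i) ((predDom_eq hsplit P i).trans hP) (hargs i),
        dcast_dcast]
    simp only [FirstOrder.Language.Term.realize_relabel, Sum.elim_comp_inl]
    exact Iff.of_eq (congrArg (A.interpPred P) this)
  | .falsum, hin, ν => by
    letI : (partLang sp s).Structure (A.dom s) := partStr hsplit A s
    rw [trF]
    simp only [FirstOrder.Language.Formula.realize_bot]
    exact Iff.rfl
  | .imp φ ψ, hin, ν => by
    rw [trF]
    rw [@FirstOrder.Language.Formula.realize_imp (partLang sp s) (A.dom s)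
      (partStr hsplit A s)]
    rw [trF_realize hsplit A s φ hin.1 ν, trF_realize hsplit A s ψ hin.2 ν]
    exact Iff.rfl
  | .all t n φ, hin, ν => by
    obtain ⟨ht, hφ⟩ := hin
    have h : t = s := by rw [← sortPart_eq (sp := sp) hsplit t, ht]
    subst h
    rw [trF, if_pos rfl]
    rw [@FirstOrder.Language.Formula.realize_iAlls (partLang sp t) (A.dom t)
      (partStr hsplit A t)]
    simp only [FirstOrder.Language.Formula.realize_relabel, Function.comp_def]
    show (∀ i : Unit → A.dom t, _) ↔ _
    constructor
    · intro h a
      have := h (fun _ => a)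
      rw [show (fun m => Sum.elim (fun n => ν t n) (fun _ => a)
            (if m = n then Sum.inr () else Sum.inl m)) =
          (fun m => (ν.update t n a) t m) from ?_] at this
      · exact (trF_realize hsplit A t φ hφ (ν.update t n a)).1 this
      · funext m
        by_cases hm : m = n <;> simp [hm, update_same]
    · intro h i
      have := (trF_realize hsplit A t φ hφ (ν.update t n (i ()))).2 (h (i ()))
      rw [show (fun m => (ν.update t n (i ())) t m) =
          (fun m => Sum.elim (fun n => ν t n) i
            (if m = n then Sum.inr () else Sum.inl m)) from ?_] at this
      · exact this
      · funext m
        by_cases hm : m = n <;> simp [hm, update_same]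

/-! ### Isomorphisms preserve satisfaction -/

theorem iso_map_update {A B : Structure Sg} (e : Iso A B) (ν : Assign A)
    (s : Sg.Sorts) (n : ℕ) (a : A.dom s) :
    (fun t m => e.toEquiv t ((ν.update s n a) t m)) =
      Assign.update (A := B) (fun t m => e.toEquiv t (ν t m)) s n (e.toEquiv s a) := by
  funext t m
  by_cases h : s = t
  · subst h
    by_cases hm : m = n <;> simp [Assign.update, hm]
  · simp [Assign.update, h]

theorem iso_eval {A B : Structure Sg} (e : Iso A B) :
    ∀ {t : Sg.Sorts} (tm : Term Sg t) (ν : Assign A),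
      Term.eval (A := B) (fun s n => e.toEquiv s (ν s n)) tm = e.toEquiv t (tm.eval ν)
  | _, .var s n, ν => rfl
  | _, .app f args, ν => by
    simp only [Term.eval]
    rw [e.map_func]
    congr 1
    funext i
    exact iso_eval e (args i) ν

theorem iso_sat {A B : Structure Sg} (e : Iso A B) :
    ∀ (φ : Formula Sg) (ν : Assign A),
      Sat A ν φ ↔ Sat B (fun s n => e.toEquiv s (ν s n)) φ
  | .eq t u, ν => by
    simp only [Sat]
    rw [iso_eval e t ν, iso_eval e u ν]
    exact ((e.toEquiv _).apply_eq_iff_eq).symm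
  | .pred P args, ν => by
    simp only [Sat]
    have : (fun i => Term.eval (A := B) (fun s n => e.toEquiv s (ν s n)) (args i)) =
        (fun i => e.toEquiv _ ((args i).eval ν)) := by
      funext i; exact iso_eval e (args i) ν
    rw [this]
    exact e.map_pred P _
  | .falsum, ν => Iff.rfl
  | .imp φ ψ, ν => by
    simp only [Sat]
    rw [iso_sat e φ ν, iso_sat e ψ ν]
  | .all s n φ, ν => by
    simp only [Sat]
    constructor
    · intro h b
      have := (iso_sat e φ (ν.update s n ((e.toEquiv s).symm b))).1 (h _)
      rwa [iso_map_update, Equiv.apply_symm_apply] at this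
    · intro h a
      refine (iso_sat e φ (ν.update s n a)).2 ?_
      rw [iso_map_update]
      exact h (e.toEquiv s a)

/-! ### Transfer of universally-quantified formulas along elementary equivalence -/

theorem forall_realize_iff_sentence {L : FirstOrder.Language.{0, 0}} (ψ : L.Formula ℕ)
    (K : Type) [Nonempty K] [L.Structure K] :
    (∀ v : ℕ → K, ψ.Realize v) ↔
      K ⊨ (Formula.iAlls (α := Empty) ↥(↑ψ.freeVarFinset : Set ℕ) (Formula.relabel Sum.inr
        (ψ.restrictFreeVar (Set.inclusion (subset_refl ↑ψ.freeVarFinset))))) := by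
  have key : ∀ v : ℕ → K,
      Formula.Realize (ψ.restrictFreeVar (Set.inclusion (subset_refl ↑ψ.freeVarFinset)))
        (v ∘ (↑)) ↔ ψ.Realize v := fun v =>
    BoundedFormula.realize_restrictFreeVar' (subset_refl _)
  rw [Sentence.Realize, Formula.realize_iAlls]
  simp only [Formula.realize_relabel, Function.comp_def]
  constructor
  · intro h i
    set v : ℕ → K := fun n => if hn : n ∈ (↑ψ.freeVarFinset : Set ℕ) then i ⟨n, hn⟩
      else Classical.arbitrary K with hv
    have hvi : v ∘ (↑) = i := by
      funext a
      simp only [Function.comp_apply, hv]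
      rw [dif_pos a.2]
    have := (key v).2 (h v)
    rw [show (fun a => Sum.elim (default : Empty → K) i (Sum.inr a)) = v ∘ (↑) from
      by rw [hvi]; rfl]
    exact this
  · intro h v
    exact (key v).1 (h (v ∘ (↑)))

theorem equiv_forall_realize {L : FirstOrder.Language.{0, 0}} {M N : Type} [Nonempty M] [Nonempty N]
    [L.Structure M] [L.Structure N] (h : M ≅[L] N) (ψ : L.Formula ℕ) :
    (∀ v : ℕ → M, ψ.Realize v) ↔ (∀ v : ℕ → N, ψ.Realize v) := by
  rw [forall_realize_iff_sentence ψ M, forall_realize_iff_sentence ψ N]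
  exact h.realize_sentence _

/-! ### Cardinality of the part language -/

theorem partLang_card_le (s : Sg.Sorts) : (partLang sp s).card ≤ sp.partCard s := by
  have hF : #(Σ n, (partLang sp s).Functions n) ≤ #{f : Sg.Func // sp.funcPart f = s} := by
    refine Cardinal.mk_le_of_injective (f := fun x => ⟨x.2.1, x.2.2.1⟩) ?_
    rintro ⟨n, f, hf, rfl⟩ ⟨m, g, hg, rfl⟩ he
    simp only [Subtype.mk.injEq] at he
    subst he
    rfl
  have hR : #(Σ n, (partLang sp s).Relations n) ≤ #{P : Sg.Pred // sp.predPart P = s} := by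
    refine Cardinal.mk_le_of_injective (f := fun x => ⟨x.2.1, x.2.2.1⟩) ?_
    rintro ⟨n, f, hf, rfl⟩ ⟨m, g, hg, rfl⟩ he
    simp only [Subtype.mk.injEq] at he
    subst he
    rfl
  have hcard : (partLang sp s).card =
      #(Σ n, (partLang sp s).Functions n) + #(Σ n, (partLang sp s).Relations n) := by
    rw [FirstOrder.Language.card, FirstOrder.Language.Symbols, Cardinal.mk_sum, Cardinal.lift_id, Cardinal.lift_id]
  rw [hcard, Split.partCard]
  calc #(Σ n, (partLang sp s).Functions n) + #(Σ n, (partLang sp s).Relations n)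
      ≤ #{f : Sg.Func // sp.funcPart f = s} + #{P : Sg.Pred // sp.predPart P = s} :=
        add_le_add hF hR
    _ ≤ #{t : Sg.Sorts // sp.sortPart t = s} +
        (#{f : Sg.Func // sp.funcPart f = s} + #{P : Sg.Pred // sp.predPart P = s}) :=
        le_add_self
    _ = _ := (add_assoc _ _ _).symm

/-! ### Building a many-sorted structure from one-sorted parts -/

variable (sp) in
/-- Combine one-sorted structures for each part into a many-sorted structure. -/
def combinedStr (hsplit : sp.sortPart = id) (D : Sg.Sorts → Type)
    (str : ∀ s, (partLang sp s).Structure (D s)) (hne : ∀ s, Nonempty (D s)) :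
    Structure Sg where
  dom := D
  dom_nonempty := hne
  interpFunc f args :=
    dcast (D := D) (funcCod_eq hsplit f).symm
      ((str (sp.funcPart f)).funMap
        (⟨f, rfl, rfl⟩ : (partLang sp (sp.funcPart f)).Functions (Sg.funcDom f).length)
        (fun i => dcast (D := D) (funcDom_eq hsplit f i) (args i)))
  interpPred P args :=
    (str (sp.predPart P)).RelMap
      (⟨P, rfl, rfl⟩ : (partLang sp (sp.predPart P)).Relations (Sg.predDom P).length)
      (fun i => dcast (D := D) (predDom_eq hsplit P i) (args i))

theorem combinedStr_partStr (hsplit : sp.sortPart = id) (D : Sg.Sorts → Type)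
    (str : ∀ s, (partLang sp s).Structure (D s)) (hne : ∀ s, Nonempty (D s))
    (s : Sg.Sorts) :
    partStr hsplit (combinedStr sp hsplit D str hne) s = str s := by
  ext1
  · funext n g x
    obtain ⟨f, hf, hlen⟩ := g
    subst hf
    subst hlen
    show dcast (D := D) _ (dcast (D := D) _
      ((str (sp.funcPart f)).funMap ⟨f, rfl, rfl⟩ _)) = _
    rw [dcast_dcast]
    congr 1
    funext i
    show dcast (D := D) _ (dcast (D := D) _ (x (Fin.cast rfl i))) = x i
    exact dcast_dcast _ _ _
  · funext n r x
    obtain ⟨P, hP, hlen⟩ := r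
    subst hP
    subst hlen
    show (str (sp.predPart P)).RelMap ⟨P, rfl, rfl⟩ _ = _
    congr 1
    funext i
    show dcast (D := D) _ (dcast (D := D) _ (x (Fin.cast rfl i))) = x i
    exact dcast_dcast _ _ _

/-! ### Per-part agreement -/

theorem part_agree (hsplit : sp.sortPart = id) (A B : Structure Sg)
    (heq : ∀ s : Sg.Sorts, ∀ ψf : (partLang sp s).Formula ℕ,
      (∀ v : ℕ → A.dom s,
        @FirstOrder.Language.Formula.Realize (partLang sp s) (A.dom s) (partStr hsplit A s)
          ℕ ψf v) ↔
      (∀ v : ℕ → B.dom s,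
        @FirstOrder.Language.Formula.Realize (partLang sp s) (B.dom s) (partStr hsplit B s)
          ℕ ψf v))
    (l : Sg.Sorts) (ψ : Formula Sg) (hin : ψ.inPart sp l) :
    (∀ ν : Assign A, Sat A ν ψ) ↔ (∀ ν : Assign B, Sat B ν ψ) := by
  have hX : ∀ (X : Structure Sg),
      (∀ ν : Assign X, Sat X ν ψ) ↔
        (∀ v : ℕ → X.dom l,
          @FirstOrder.Language.Formula.Realize (partLang sp l) (X.dom l) (partStr hsplit X l)
            ℕ (trF sp l ψ) v) := by
    intro X
    constructor
    · intro h v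
      set νv : Assign X := fun t m =>
        if hh : l = t then dcast (D := X.dom) hh (v m)
        else Classical.choice (X.dom_nonempty t) with hνv
      have hvl : (fun n => νv l n) = v := by
        funext m
        simp only [hνv, dif_pos rfl, dcast_rfl]
      have := (trF_realize hsplit X l ψ hin νv).2 (h νv)
      rwa [hvl] at this
    · intro h ν
      exact (trF_realize hsplit X l ψ hin ν).1 (h (fun n => ν l n))
  rw [hX A, hX B]
  exact heq l (trF sp l ψ)

/-! ### Existence of a model of prescribed cardinalities, agreeing part-wise -/

theorem exists_kappa_model (hsplit : sp.sortPart = id) (T : Set (Formula Sg))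
    (hinf : ∀ A : Structure Sg, Models A T → ∀ s : Sg.Sorts, Infinite (A.dom s))
    (κ : Sg.Sorts → Cardinal) (hκ : ∀ s : Sg.Sorts, sp.partCard s ≤ κ s)
    (hκinf : ∀ s, ℵ₀ ≤ κ s)
    (A : Structure Sg) (hA : Models A T) :
    ∃ A' : Structure Sg, (∀ s, #(A'.dom s) = κ s) ∧
      (∀ (l : Sg.Sorts) (ψ : Formula Sg), ψ.inPart sp l →
        ((∀ ν : Assign A, Sat A ν ψ) ↔ (∀ ν : Assign A', Sat A' ν ψ))) := by
  have hchoice : ∀ s : Sg.Sorts, ∃ N : CategoryTheory.Bundled (partLang sp s).Structure,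
      (letI := partStr hsplit A s
       Nonempty ((A.dom s) ≅[partLang sp s] N)) ∧ #N = κ s := by
    intro s
    letI := partStr hsplit A s
    haveI := hinf A hA s
    obtain ⟨N, hN1, hN2⟩ := exists_elementarilyEquivalent_card_eq (partLang sp s)
      (A.dom s) (κ s) (hκinf s)
      (by simpa using le_trans (partLang_card_le s) (hκ s))
    exact ⟨N, ⟨hN1⟩, hN2⟩
  choose N hNequiv hNcard using hchoice
  set D : Sg.Sorts → Type := fun s => (N s).α with hD
  have hne : ∀ s, Nonempty (D s) := by
    intro s
    refine Cardinal.mk_ne_zero_iff.1 ?_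
    rw [show #(D s) = κ s from hNcard s]
    exact (Cardinal.aleph0_pos.trans_le (hκinf s)).ne'
  set str : ∀ s, (partLang sp s).Structure (D s) := fun s => (N s).str with hstr
  set A' : Structure Sg := combinedStr sp hsplit D str hne with hA'
  refine ⟨A', fun s => hNcard s, ?_⟩
  refine part_agree hsplit A A' (fun s ψf => ?_)
  letI : (partLang sp s).Structure (A.dom s) := partStr hsplit A s
  haveI : Nonempty (A.dom s) := A.dom_nonempty s
  haveI : Nonempty (D s) := hne s
  have h1 := equiv_forall_realize (Classical.choice (hNequiv s)) ψf
  have h2 : partStr hsplit A' s = str s :=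
    combinedStr_partStr hsplit D str hne s
  rw [show partStr hsplit A' s = str s from h2]
  exact h1

theorem iso_forall_sat {A B : Structure Sg} (e : Iso A B) (φ : Formula Sg) :
    (∀ ν : Assign A, Sat A ν φ) ↔ (∀ ν : Assign B, Sat B ν φ) := by
  constructor
  · intro h ν'
    have := (iso_sat e φ (fun s n => (e.toEquiv s).symm (ν' s n))).1 (h _)
    rwa [show (fun s n => e.toEquiv s ((e.toEquiv s).symm (ν' s n))) = ν' from
      funext fun s => funext fun n => (e.toEquiv s).apply_symm_apply _] at this
  · intro h ν
    exact (iso_sat e φ ν).2 (h _)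

end MS

theorem many_sorted_los_vaught' {Sg : MSSignature}
    (sp : Split Sg Sg.Sorts) (hsplit : sp.sortPart = id)
    (T : Set (Formula Sg)) (hsent : ∀ φ ∈ T, Formula.IsSentence φ)
    (hinf : ∀ A : Structure Sg, Models A T → ∀ s : Sg.Sorts, Infinite (A.dom s))
    (κ : Sg.Sorts → Cardinal) (hκ : ∀ s : Sg.Sorts, sp.partCard s ≤ κ s)
    (hcat : Categorical T κ) :
    Complete T := by
  obtain ⟨⟨A₀, hA₀, hA₀κ⟩, huniq⟩ := hcat
  have hκinf : ∀ s, ℵ₀ ≤ κ s := fun s => by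
    haveI := hinf A₀ hA₀ s
    rw [← hA₀κ s]
    exact Cardinal.aleph0_le_mk _
  have claim : ∀ A B : Structure Sg, Models A T → Models B T →
      ∀ φ : Formula Sg, φ.IsSentence →
        ((∀ ν : Assign A, Sat A ν φ) ↔ (∀ ν : Assign B, Sat B ν φ)) := by
    intro A B hA hB φ hφ
    obtain ⟨A', hA'κ, hAagree⟩ := exists_kappa_model hsplit T hinf κ hκ hκinf A hA
    obtain ⟨B', hB'κ, hBagree⟩ := exists_kappa_model hsplit T hinf κ hκ hκinf B hB
    have hA'T : Models A' T := fun ψ hψ =>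
      (transfer hsplit (fun l χ hin => hAagree l χ hin) (hsent ψ hψ)).1 (hA ψ hψ)
    have hB'T : Models B' T := fun ψ hψ =>
      (transfer hsplit (fun l χ hin => hBagree l χ hin) (hsent ψ hψ)).1 (hB ψ hψ)
    have e : Iso A' B' := (huniq A' B' hA'T hB'T hA'κ hB'κ).some
    calc (∀ ν : Assign A, Sat A ν φ)
        ↔ (∀ ν : Assign A', Sat A' ν φ) :=
          transfer hsplit (fun l χ hin => hAagree l χ hin) hφ
      _ ↔ (∀ ν : Assign B', Sat B' ν φ) := iso_forall_sat e φ
      _ ↔ (∀ ν : Assign B, Sat B ν φ) :=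
          (transfer hsplit (fun l χ hin => hBagree l χ hin) hφ).symm
  intro φ hφ
  by_cases hpos : ∀ A : Structure Sg, Models A T → ∀ ν : Assign A, Sat A ν φ
  · exact Or.inl hpos
  · refine Or.inr ?_
    push_neg at hpos
    obtain ⟨B, hB, ν₀, hν₀⟩ := hpos
    intro A hA ν hsat
    have hAall : ∀ ν' : Assign A, Sat A ν' φ := fun ν' => (sat_closed hφ).1 hsat
    exact hν₀ ((claim A B hA hB φ hφ).1 hAall ν₀)


/-- Many-sorted Łoś–Vaught test for completely split signatures: if `Σ` is
completely split (the parts of the splitting are exactly the single sorts), every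
model of `T` interprets every sort as an infinite set, and `T` is `κ`-categorical
for some cardinal function with `κ(σ) ≥ |Σ_σ|` for every sort `σ`, then `T` is
complete. -/
theorem many_sorted_los_vaught {Sg : MSSignature}
    (sp : Split Sg Sg.Sorts) (hsplit : sp.sortPart = id)
    (T : Set (Formula Sg)) (hsent : ∀ φ ∈ T, Formula.IsSentence φ)
    (hinf : ∀ A : Structure Sg, Models A T → ∀ s : Sg.Sorts, Infinite (A.dom s))
    (κ : Sg.Sorts → Cardinal) (hκ : ∀ s : Sg.Sorts, sp.partCard s ≤ κ s)
    (hcat : Categorical T κ) :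
    Complete T := by
  exact many_sorted_los_vaught' sp hsplit T hsent hinf κ hκ hcat
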